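/- Consider the system du/dt = (I_N − diag(u)) f(u) − D_γ u on [0,1]ᴺ, where f is continuous, f(0)=0, f ≥ 0, f concave, and Q₁ := J_f(0) − D_γ satisfies s(Q₁) < 0 with Q₁ irreducible Metzler. Then V(u) = uᵀPu, with P the positive definite diagonal matrix from diagonal stability of Q₁, satisfies dV/dt ≤ uᵀ(Q₁ᵀP + PQ₁)u ≤ 0 along solutions, with equality only at u = 0. -/
import Mathlib


open Matrix

/-- `μ` is a (complex) eigenvalue of the matrix `A`. -/
def isEig {n : ℕ} (A : Matrix (Fin n) (Fin n) ℂ) (μ : ℂ) : Prop :=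
  ∃ v : Fin n → ℂ, v ≠ 0 ∧ A.mulVec v = μ • v

/-- `s(A)`: the maximum real part of an eigenvalue of the real matrix `A`. -/
noncomputable def sMax {n : ℕ} (A : Matrix (Fin n) (Fin n) ℝ) : ℝ :=
  sSup {r : ℝ | ∃ μ : ℂ, isEig (A.map Complex.ofReal) μ ∧ r = μ.re}

/-- A real square matrix is Metzler if its off-diagonal entries are nonnegative. -/
def IsMetzler {n : ℕ} (A : Matrix (Fin n) (Fin n) ℝ) : Prop :=
  ∀ i j, i ≠ j → 0 ≤ A i j

/-- Irreducibility of a matrix: no nontrivial invariant coordinate subset. -/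
def IsIrreducibleMat {n : ℕ} (A : Matrix (Fin n) (Fin n) ℝ) : Prop :=
  ∀ S : Set (Fin n), S.Nonempty → S ≠ Set.univ → ∃ i ∈ S, ∃ j, j ∉ S ∧ A i j ≠ 0

/-- Negative definiteness of the quadratic form of `P`. -/
def NegDefQ {n : ℕ} (P : Matrix (Fin n) (Fin n) ℝ) : Prop :=
  ∀ x : Fin n → ℝ, x ≠ 0 → x ⬝ᵥ P.mulVec x < 0

/-- Lyapunov estimate for `du/dt = (I − diag u)f(u) − D_γ u`: with `V(u) = uᵀPu` and
`P = diag(p)` from diagonal stability of `Q₁ = J_f(0) − D_γ`, one has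
`dV/dt = 2uᵀP[(I − diag u)f(u) − D_γ u] ≤ uᵀ(Q₁ᵀP + PQ₁)u ≤ 0` on `[0,1]ᴺ`,
with equality only at `u = 0`. -/
theorem stmt18 {N : ℕ} (f : (Fin N → ℝ) → Fin N → ℝ) (J Q₁ : Matrix (Fin N) (Fin N) ℝ)
    (γ p : Fin N → ℝ) (hγ : ∀ i, 0 < γ i) (hp : ∀ i, 0 < p i)
    (hfc : Continuous f) (hf0 : f 0 = 0)
    (hfnn : ∀ u ∈ Set.Icc (0 : Fin N → ℝ) 1, ∀ i, 0 ≤ f u i)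
    (hflin : ∀ u ∈ Set.Icc (0 : Fin N → ℝ) 1, ∀ i, f u i ≤ J.mulVec u i)
    (hQ : Q₁ = J - diagonal γ)
    (hM : IsMetzler Q₁) (hIrr : IsIrreducibleMat Q₁) (hs : sMax Q₁ < 0)
    (hnd : NegDefQ (Q₁ᵀ * diagonal p + diagonal p * Q₁)) :
    ∀ u ∈ Set.Icc (0 : Fin N → ℝ) 1,
      2 * (u ⬝ᵥ (diagonal p).mulVec (fun i => (1 - u i) * f u i - γ i * u i))
          ≤ u ⬝ᵥ (Q₁ᵀ * diagonal p + diagonal p * Q₁).mulVec u ∧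
        u ⬝ᵥ (Q₁ᵀ * diagonal p + diagonal p * Q₁).mulVec u ≤ 0 ∧
        (u ⬝ᵥ (Q₁ᵀ * diagonal p + diagonal p * Q₁).mulVec u = 0 → u = 0) := by
  intro u hu
  obtain ⟨hu0, hu1⟩ := hu
  have key : u ⬝ᵥ (Q₁ᵀ * diagonal p + diagonal p * Q₁).mulVec u
      = 2 * ∑ i, u i * (p i * Q₁.mulVec u i) := by
    have hd : (diagonal p).mulVec u = fun i => p i * u i := by
      ext i; simp [Matrix.mulVec_diagonal]
    have hd2 : (diagonal p).mulVec (Q₁.mulVec u) = fun i => p i * Q₁.mulVec u i := by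
      ext i; simp [Matrix.mulVec_diagonal]
    simp only [Matrix.add_mulVec, dotProduct_add, ← Matrix.mulVec_mulVec, hd, hd2]
    have h1 : u ⬝ᵥ Q₁ᵀ.mulVec (fun i => p i * u i)
        = Q₁.mulVec u ⬝ᵥ (fun i => p i * u i) := by
      rw [Matrix.dotProduct_mulVec, Matrix.vecMul_transpose]
    have h2 : u ⬝ᵥ (fun i => p i * Q₁.mulVec u i)
        = ∑ i, u i * (p i * Q₁.mulVec u i) := rfl
    rw [h1, h2]
    simp only [dotProduct]
    rw [two_mul]
    congr 1
    apply Finset.sum_congr rfl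
    intro i _
    ring
  have hQu : ∀ i, Q₁.mulVec u i = J.mulVec u i - γ i * u i := by
    intro i
    rw [hQ, Matrix.sub_mulVec]
    simp [Matrix.mulVec_diagonal]
  constructor
  · rw [key]
    have hdp : u ⬝ᵥ (diagonal p).mulVec (fun i => (1 - u i) * f u i - γ i * u i)
        = ∑ i, u i * (p i * ((1 - u i) * f u i - γ i * u i)) := by
      simp [Matrix.mulVec_diagonal, dotProduct]
    rw [hdp, Finset.mul_sum, Finset.mul_sum]
    apply Finset.sum_le_sum
    intro i _
    have hui : 0 ≤ u i := hu0 i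
    have hpi : 0 ≤ p i := (hp i).le
    have hf : (1 - u i) * f u i ≤ f u i := by
      have := hfnn u ⟨hu0, hu1⟩ i
      nlinarith [hu1 i]
    have hstep : (1 - u i) * f u i - γ i * u i ≤ Q₁.mulVec u i := by
      rw [hQu i]
      have := hflin u ⟨hu0, hu1⟩ i
      linarith
    have : u i * (p i * ((1 - u i) * f u i - γ i * u i))
        ≤ u i * (p i * Q₁.mulVec u i) := by
      apply mul_le_mul_of_nonneg_left _ hui
      exact mul_le_mul_of_nonneg_left hstep hpi
    linarith
  · by_cases hzu : u = 0
    · subst hzu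
      simp
    · have := hnd u hzu
      exact ⟨this.le, fun h => absurd h (by linarith)⟩
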